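/- Let g : V⁰ → ℝ with g(q₁)=0, g(q₂)=e ∈ (0, 1/7], g(q₃)=1. Let u¹ be the infinity harmonic function on V¹ with boundary data g, and u² the infinity harmonic function on V² with boundary data g. Then u¹(q₁₂) = (1+e)/4 while u²(q₁₂) = (3+4e)/12, so u²(q₁₂) ≠ u¹(q₁₂); in particular the restriction of u² to V¹ is not infinity harmonic on the level-1 graph. -/

import Mathlib

open Filter Topology
open scoped Classical

noncomputable section

variable {V : Type*}

/-- A path from `x` to `y` whose interior vertices `l` all lie in `K`. -/
def pathIn (adj : V → V → Prop) (K : Set V) (x y : V) (l : List V) : Prop :=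
  List.Chain adj x (l ++ [y]) ∧ ∀ z ∈ l, z ∈ K

/-- The restricted path metric `d_K` (edge length `δ`), via paths with interior in `K`. -/
def dK (adj : V → V → Prop) (K : Set V) (δ : ℝ) (x y : V) : ℝ :=
  if x = y then 0
  else sInf {r : ℝ | ∃ l : List V, pathIn adj K x y l ∧ r = δ * (l.length + 1)}

/-- The boundary of a vertex set `K`. -/
def bdry (adj : V → V → Prop) (K : Set V) : Set V :=
  {y | y ∉ K ∧ ∃ x ∈ K, adj x y}

/-- The graph infinity Laplacian. -/
def lapInf (adj : V → V → Prop) (u : V → ℝ) (x : V) : ℝ :=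
  sSup ((fun y => u y - u x) '' {y | adj x y}) +
    sInf ((fun y => u y - u x) '' {y | adj x y})

/-- The local Lipschitz constant `F(u,x)` at a vertex `x`. -/
def locLip (adj : V → V → Prop) (δ : ℝ) (u : V → ℝ) (x : V) : ℝ :=
  sSup ((fun y => |u x - u y| / δ) '' {y | adj x y})

/-- The Lipschitz constant of `u` over the set `A`, measured in the metric `d_K`. -/
def LipOn (adj : V → V → Prop) (K A : Set V) (δ : ℝ) (u : V → ℝ) : ℝ :=
  sSup {r : ℝ | ∃ x ∈ A, ∃ y ∈ A, x ≠ y ∧ r = |u x - u y| / dK adj K δ x y}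

/-- `K` is connected: any two points of `K ∪ ∂K` are joined by a path through `K`. -/
def connectedIn (adj : V → V → Prop) (K : Set V) : Prop :=
  ∀ x ∈ K ∪ bdry adj K, ∀ y ∈ K ∪ bdry adj K, x ≠ y → ∃ l, pathIn adj K x y l

/-- Vertices of the initial unit equilateral triangle. -/
def q : Fin 3 → ℝ × ℝ := ![(0, 0), (1, 0), (1/2, Real.sqrt 3 / 2)]

/-- The contraction maps generating the Sierpinski gasket. -/
def psi (i : Fin 3) (x : ℝ × ℝ) : ℝ × ℝ := q i + (2 : ℝ)⁻¹ • (x - q i)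

/-- `ψ_w = ψ_{w₁} ∘ ⋯ ∘ ψ_{wₙ}` for a word `w`. -/
def psiW (w : List (Fin 3)) : ℝ × ℝ → ℝ × ℝ := w.foldr (fun i f => psi i ∘ f) id

def V0 : Set (ℝ × ℝ) := {q 0, q 1, q 2}

/-- The `n`-th pre-fractal vertex set `Vⁿ`. -/
def Vn (n : ℕ) : Set (ℝ × ℝ) := ⋃ w ∈ {w : List (Fin 3) | w.length = n}, psiW w '' V0

/-- Adjacency on `Vⁿ`: `x ~ₙ y` iff `x ≠ y` and the segment `xy` is the image of a side
of the initial triangle under some `ψ_w` with `|w| = n`. -/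
def adjN (n : ℕ) (x y : ℝ × ℝ) : Prop :=
  x ≠ y ∧ ∃ w : List (Fin 3), w.length = n ∧ x ∈ psiW w '' V0 ∧ y ∈ psiW w '' V0

/-- Edge length `δₙ = 2⁻ⁿ`. -/
def deltaN (n : ℕ) : ℝ := (2 : ℝ)⁻¹ ^ n


namespace Stmt16aux

/-! ### Integer-coordinate model of the vertices -/

def PZ (p : ℤ × ℤ) : ℝ × ℝ := ((p.1 : ℝ)/8, (p.2 : ℝ)/8 * Real.sqrt 3)

lemma PZ_inj : Function.Injective PZ := by
  have h3 : Real.sqrt 3 ≠ 0 := by positivity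
  rintro ⟨a, b⟩ ⟨c, d⟩ h
  obtain ⟨h1, h2⟩ := Prod.ext_iff.1 h
  simp only [PZ] at h1 h2
  have ha : (a : ℝ) = c := by field_simp at h1; exact_mod_cast h1
  have hb : (b : ℝ) = d := by
    have := mul_right_cancel₀ h3 h2
    field_simp at this
    exact_mod_cast this
  exact Prod.ext (by exact_mod_cast ha) (by exact_mod_cast hb)

def QZ : Fin 3 → ℤ × ℤ := ![(0,0), (8,0), (4,4)]

lemma q_eq_PZ : ∀ k : Fin 3, q k = PZ (QZ k) := by
  intro k
  fin_cases k <;> simp [q, QZ, PZ, Prod.ext_iff] <;> norm_num <;> ring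

lemma q0_PZ : q 0 = PZ (0,0) := by rw [q_eq_PZ]; congr 1
lemma q1_PZ : q 1 = PZ (8,0) := by rw [q_eq_PZ]; congr 1
lemma q2_PZ : q 2 = PZ (4,4) := by rw [q_eq_PZ]; congr 1

def half (p : ℤ × ℤ) : ℤ × ℤ := (p.1/2, p.2/2)

def C1 (i k : Fin 3) : ℤ × ℤ := half (QZ i + QZ k)

def C2 (i j k : Fin 3) : ℤ × ℤ := half (QZ i + C1 j k)

lemma psiW1_q (i k : Fin 3) : psiW [i] (q k) = PZ (C1 i k) := by
  fin_cases i <;> fin_cases k <;>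
    simp [psiW, psi, q, QZ, C1, half, PZ, Prod.ext_iff] <;> norm_num <;> ring

lemma psiW2_q (i j k : Fin 3) : psiW [i,j] (q k) = PZ (C2 i j k) := by
  fin_cases i <;> fin_cases j <;> fin_cases k <;>
    simp [psiW, psi, q, QZ, C1, C2, half, PZ, Prod.ext_iff] <;> norm_num <;> ring

lemma psiW1_img (i : Fin 3) :
    psiW [i] '' V0 = {PZ (C1 i 0), PZ (C1 i 1), PZ (C1 i 2)} := by
  simp [V0, Set.image_insert_eq, Set.image_singleton, psiW1_q]

lemma psiW2_img (i j : Fin 3) :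
    psiW [i,j] '' V0 = {PZ (C2 i j 0), PZ (C2 i j 1), PZ (C2 i j 2)} := by
  simp [V0, Set.image_insert_eq, Set.image_singleton, psiW2_q]

def cellL1 (i : Fin 3) : List (ℤ × ℤ) := [C1 i 0, C1 i 1, C1 i 2]
def cellL2 (i j : Fin 3) : List (ℤ × ℤ) := [C2 i j 0, C2 i j 1, C2 i j 2]

def adj1 (p r : ℤ × ℤ) : Prop := p ≠ r ∧ ∃ i : Fin 3, p ∈ cellL1 i ∧ r ∈ cellL1 i
def adj2 (p r : ℤ × ℤ) : Prop := p ≠ r ∧ ∃ i j : Fin 3, p ∈ cellL2 i j ∧ r ∈ cellL2 i j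

instance (p : ℤ × ℤ) : DecidablePred (adj1 p) := fun r => by unfold adj1; infer_instance
instance (p : ℤ × ℤ) : DecidablePred (adj2 p) := fun r => by unfold adj2; infer_instance

lemma mem_cell1_iff (i : Fin 3) (x : ℝ × ℝ) :
    x ∈ psiW [i] '' V0 ↔ ∃ r ∈ cellL1 i, x = PZ r := by
  rw [psiW1_img]; simp [cellL1]

lemma mem_cell2_iff (i j : Fin 3) (x : ℝ × ℝ) :
    x ∈ psiW [i,j] '' V0 ↔ ∃ r ∈ cellL2 i j, x = PZ r := by
  rw [psiW2_img]; simp [cellL2]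

lemma adjN1_iff (p : ℤ × ℤ) (y : ℝ × ℝ) :
    adjN 1 (PZ p) y ↔ ∃ r : ℤ × ℤ, y = PZ r ∧ adj1 p r := by
  constructor
  · rintro ⟨hne, w, hw, hx, hy⟩
    match w, hw with
    | [i], _ =>
      obtain ⟨rp, hrp, hxp⟩ := (mem_cell1_iff i _).1 hx
      obtain ⟨rr, hrr, hyr⟩ := (mem_cell1_iff i _).1 hy
      have hpr : p = rp := PZ_inj hxp
      refine ⟨rr, hyr, ?_, i, by rw [hpr]; exact hrp, hrr⟩
      rintro rfl; exact hne hyr.symm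
  · rintro ⟨r, rfl, hne, i, hp, hr⟩
    exact ⟨fun h => hne (PZ_inj h), [i], rfl,
      (mem_cell1_iff i _).2 ⟨p, hp, rfl⟩, (mem_cell1_iff i _).2 ⟨r, hr, rfl⟩⟩

lemma adjN2_iff (p : ℤ × ℤ) (y : ℝ × ℝ) :
    adjN 2 (PZ p) y ↔ ∃ r : ℤ × ℤ, y = PZ r ∧ adj2 p r := by
  constructor
  · rintro ⟨hne, w, hw, hx, hy⟩
    match w, hw with
    | [i, j], _ =>
      obtain ⟨rp, hrp, hxp⟩ := (mem_cell2_iff i j _).1 hx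
      obtain ⟨rr, hrr, hyr⟩ := (mem_cell2_iff i j _).1 hy
      have hpr : p = rp := PZ_inj hxp
      refine ⟨rr, hyr, ?_, i, j, by rw [hpr]; exact hrp, hrr⟩
      rintro rfl; exact hne hyr.symm
  · rintro ⟨r, rfl, hne, i, j, hp, hr⟩
    exact ⟨fun h => hne (PZ_inj h), [i, j], rfl,
      (mem_cell2_iff i j _).2 ⟨p, hp, rfl⟩, (mem_cell2_iff i j _).2 ⟨r, hr, rfl⟩⟩

def allL1 : List (ℤ × ℤ) := [(0,0),(8,0),(4,4),(4,0),(2,2),(6,2)]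

def allL : List (ℤ × ℤ) :=
  [(0,0),(8,0),(4,4),(4,0),(2,2),(6,2),(2,0),(1,1),(3,1),(6,0),(7,1),(5,1),(3,3),(5,3),(4,2)]

lemma adj1_mem {p r : ℤ × ℤ} (h : adj1 p r) : r ∈ allL1 := by
  obtain ⟨-, i, -, hr⟩ := h
  have H : ∀ i : Fin 3, ∀ s ∈ cellL1 i, s ∈ allL1 := by decide
  exact H i r hr

lemma adj2_mem {p r : ℤ × ℤ} (h : adj2 p r) : r ∈ allL := by
  obtain ⟨-, i, j, -, hr⟩ := h
  have H : ∀ i j : Fin 3, ∀ s ∈ cellL2 i j, s ∈ allL := by decide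
  exact H i j r hr

def N1 (p : ℤ × ℤ) : Finset (ℤ × ℤ) := allL1.toFinset.filter (adj1 p)
def N2 (p : ℤ × ℤ) : Finset (ℤ × ℤ) := allL.toFinset.filter (adj2 p)

lemma nbrset1 (p : ℤ × ℤ) : {y | adjN 1 (PZ p) y} = ↑((N1 p).image PZ) := by
  ext y
  simp only [Set.mem_setOf_eq, adjN1_iff, Finset.coe_image, Set.mem_image,
    Finset.mem_coe, N1, Finset.mem_filter, List.mem_toFinset]
  constructor
  · rintro ⟨r, rfl, h⟩; exact ⟨r, ⟨adj1_mem h, h⟩, rfl⟩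
  · rintro ⟨r, ⟨-, h⟩, rfl⟩; exact ⟨r, rfl, h⟩

lemma nbrset2 (p : ℤ × ℤ) : {y | adjN 2 (PZ p) y} = ↑((N2 p).image PZ) := by
  ext y
  simp only [Set.mem_setOf_eq, adjN2_iff, Finset.coe_image, Set.mem_image,
    Finset.mem_coe, N2, Finset.mem_filter, List.mem_toFinset]
  constructor
  · rintro ⟨r, rfl, h⟩; exact ⟨r, ⟨adj2_mem h, h⟩, rfl⟩
  · rintro ⟨r, ⟨-, h⟩, rfl⟩; exact ⟨r, rfl, h⟩

def IL1 : List (ℤ × ℤ) := [(4,0),(2,2),(6,2)]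
def IL2 : List (ℤ × ℤ) :=
  [(4,0),(2,2),(6,2),(2,0),(1,1),(3,1),(6,0),(7,1),(5,1),(3,3),(5,3),(4,2)]

end Stmt16aux

namespace Stmt16aux

/-! ### sup/inf helpers -/

lemma csSup_quad (a b c d : ℝ) : sSup ({a, b, c, d} : Set ℝ) = a ⊔ (b ⊔ (c ⊔ d)) := by
  rw [csSup_insert (Set.toFinite _).bddAbove ⟨d, by simp⟩,
    csSup_insert (Set.toFinite _).bddAbove ⟨d, by simp⟩, csSup_pair]

lemma csInf_quad (a b c d : ℝ) : sInf ({a, b, c, d} : Set ℝ) = a ⊓ (b ⊓ (c ⊓ d)) := by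
  rw [csInf_insert (Set.toFinite _).bddBelow ⟨d, by simp⟩,
    csInf_insert (Set.toFinite _).bddBelow ⟨d, by simp⟩, csInf_pair]

lemma max4 {a b c d M : ℝ} (h : a = M ∨ b = M ∨ c = M ∨ d = M)
    (h1 : a ≤ M) (h2 : b ≤ M) (h3 : c ≤ M) (h4 : d ≤ M) :
    a ⊔ (b ⊔ (c ⊔ d)) = M := by
  refine le_antisymm (by simp only [sup_le_iff]; exact ⟨h1, h2, h3, h4⟩) ?_
  rcases h with rfl | rfl | rfl | rfl
  · exact le_sup_left
  · exact le_sup_of_le_right le_sup_left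
  · exact le_sup_of_le_right (le_sup_of_le_right le_sup_left)
  · exact le_sup_of_le_right (le_sup_of_le_right le_sup_right)

lemma min4 {a b c d m : ℝ} (h : a = m ∨ b = m ∨ c = m ∨ d = m)
    (h1 : m ≤ a) (h2 : m ≤ b) (h3 : m ≤ c) (h4 : m ≤ d) :
    a ⊓ (b ⊓ (c ⊓ d)) = m := by
  refine le_antisymm ?_ (by simp only [le_inf_iff]; exact ⟨h1, h2, h3, h4⟩)
  rcases h with rfl | rfl | rfl | rfl
  · exact inf_le_left
  · exact inf_le_of_right_le inf_le_left
  · exact inf_le_of_right_le (inf_le_of_right_le inf_le_left)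
  · exact inf_le_of_right_le (inf_le_of_right_le inf_le_right)

lemma quad_zero {a b c d x M m : ℝ}
    (hM : a ⊔ (b ⊔ (c ⊔ d)) = M) (hm : a ⊓ (b ⊓ (c ⊓ d)) = m)
    (h : M + m = 2 * x) :
    (a - x) ⊔ ((b - x) ⊔ ((c - x) ⊔ (d - x))) + (a - x) ⊓ ((b - x) ⊓ ((c - x) ⊓ (d - x))) = 0 := by
  simp only [max_sub_sub_right, min_sub_sub_right] at *
  rw [hM, hm]; linarith

lemma lap_quad {W : Type*} (adj : W → W → Prop) (u : W → ℝ) (x y1 y2 y3 y4 : W)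
    (h : {y | adj x y} = {y1, y2, y3, y4}) :
    lapInf adj u x =
      (u y1 - u x) ⊔ ((u y2 - u x) ⊔ ((u y3 - u x) ⊔ (u y4 - u x))) +
      (u y1 - u x) ⊓ ((u y2 - u x) ⊓ ((u y3 - u x) ⊓ (u y4 - u x))) := by
  rw [lapInf, h, Set.image_insert_eq, Set.image_insert_eq, Set.image_insert_eq,
    Set.image_singleton, csSup_quad, csInf_quad]

/-! ### comparison principle -/

lemma lap_maxmin {W : Type*} (adj : W → W → Prop) (u : W → ℝ) (x : W)
    (N : Finset W) (hne : N.Nonempty) (hN : {y | adj x y} = ↑N)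
    (h : lapInf adj u x = 0) :
    (N.image u).max' (hne.image u) + (N.image u).min' (hne.image u) = 2 * u x := by
  have hsup : sSup ((fun y => u y - u x) '' {y | adj x y})
      = (N.image u).max' (hne.image u) - u x := by
    apply IsGreatest.csSup_eq
    constructor
    · obtain ⟨y0, hy0, hval⟩ := Finset.mem_image.1 ((N.image u).max'_mem (hne.image u))
      exact ⟨y0, by rw [hN]; exact hy0, by simp [hval]⟩
    · rintro r ⟨y, hy, rfl⟩
      rw [hN] at hy
      exact sub_le_sub_right (Finset.le_max' _ _ (Finset.mem_image_of_mem u hy)) _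
  have hinf : sInf ((fun y => u y - u x) '' {y | adj x y})
      = (N.image u).min' (hne.image u) - u x := by
    apply IsLeast.csInf_eq
    constructor
    · obtain ⟨y0, hy0, hval⟩ := Finset.mem_image.1 ((N.image u).min'_mem (hne.image u))
      exact ⟨y0, by rw [hN]; exact hy0, by simp [hval]⟩
    · rintro r ⟨y, hy, rfl⟩
      rw [hN] at hy
      exact sub_le_sub_right (Finset.min'_le _ _ (Finset.mem_image_of_mem u hy)) _
  rw [lapInf, hsup, hinf] at h
  linarith

lemma comparison {W : Type*} (adj : W → W → Prop) (u v : W → ℝ) (I : Finset W) (rank : W → ℕ)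
    (H : ∀ x ∈ I, ∃ N : Finset W, N.Nonempty ∧ {y | adj x y} = ↑N ∧
      (∀ y ∈ N, y ∉ I → u y = v y) ∧ (∃ y ∈ N, y ∉ I ∨ rank y < rank x))
    (hu : ∀ x ∈ I, lapInf adj u x = 0) (hv : ∀ x ∈ I, lapInf adj v x = 0) :
    ∀ x ∈ I, u x ≤ v x := by
  by_contra hcon
  push_neg at hcon
  obtain ⟨z0, hz0I, hz0⟩ := hcon
  set w : W → ℝ := fun z => u z - v z with hw
  have hIne : I.Nonempty := ⟨z0, hz0I⟩
  set M : ℝ := (I.image w).max' (hIne.image w) with hM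
  have hMpos : 0 < M :=
    lt_of_lt_of_le (sub_pos.2 hz0) (Finset.le_max' _ _ (Finset.mem_image_of_mem w hz0I))
  set S : Finset W := I.filter (fun z => w z = M) with hS
  have hSne : S.Nonempty := by
    obtain ⟨z1, hz1, hz1e⟩ := Finset.mem_image.1 ((I.image w).max'_mem (hIne.image w))
    exact ⟨z1, Finset.mem_filter.2 ⟨hz1, hz1e⟩⟩
  set U : ℝ := (S.image u).max' (hSne.image u) with hU
  obtain ⟨x1, hx1S, hx1U⟩ := Finset.mem_image.1 ((S.image u).max'_mem (hSne.image u))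
  have step : ∀ x ∈ S, u x = U → ∃ y, y ∈ S ∧ u y = U ∧ rank y < rank x := by
    intro x hxS hxU
    have hxI : x ∈ I := Finset.mem_of_mem_filter _ hxS
    have hxM : w x = M := (Finset.mem_filter.1 hxS).2
    obtain ⟨N, hne, hNs, hbd, y0, hy0N, hy0r⟩ := H x hxI
    have hwle : ∀ z ∈ N, w z ≤ M := by
      intro z hz
      by_cases hzI : z ∈ I
      · exact Finset.le_max' _ _ (Finset.mem_image_of_mem w hzI)
      · have : w z = 0 := by simp [hw, hbd z hz hzI]
        linarith
    have hequ := lap_maxmin adj u x N hne hNs (hu x hxI)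
    have heqv := lap_maxmin adj v x N hne hNs (hv x hxI)
    obtain ⟨zA, hzA, hzAe⟩ := Finset.mem_image.1 ((N.image u).max'_mem (hne.image u))
    obtain ⟨zb, hzb, hzbe⟩ := Finset.mem_image.1 ((N.image v).min'_mem (hne.image v))
    set Au := (N.image u).max' (hne.image u) with hAu
    set au := (N.image u).min' (hne.image u) with hau
    set Av := (N.image v).max' (hne.image v) with hAv
    set av := (N.image v).min' (hne.image v) with hav
    have hwzA := hwle zA hzA
    have hwzb := hwle zb hzb
    have h1 : Au ≤ Av + M := by
      have : v zA ≤ Av := Finset.le_max' _ _ (Finset.mem_image_of_mem v hzA)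
      simp only [hw] at hwzA
      linarith
    have h2 : au ≤ av + M := by
      have : au ≤ u zb := Finset.min'_le _ _ (Finset.mem_image_of_mem u hzb)
      simp only [hw] at hwzb
      linarith
    have hMx : u x - v x = M := hxM
    have e1 : Au = Av + M := by linarith
    have e2 : au = av + M := by linarith
    have hvzA : v zA ≤ Av := Finset.le_max' _ _ (Finset.mem_image_of_mem v hzA)
    have hwzAe : w zA = M := le_antisymm hwzA (by simp only [hw]; linarith)
    have hzAI : zA ∈ I := by
      by_contra h
      have h0 : w zA = 0 := by simp [hw, hbd zA hzA h]
      rw [h0] at hwzAe; linarith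
    have hzAS : zA ∈ S := Finset.mem_filter.2 ⟨hzAI, hwzAe⟩
    have hle1 : u zA ≤ U := Finset.le_max' _ _ (Finset.mem_image_of_mem u hzAS)
    have hminmax : au ≤ Au := Finset.min'_le _ _ ((N.image u).max'_mem (hne.image u))
    have hAux : Au = u x := le_antisymm (by linarith) (by linarith)
    have haux : au = u x := by linarith
    have hconstu : ∀ z ∈ N, u z = u x := by
      intro z hz
      have h1' : u z ≤ Au := Finset.le_max' _ _ (Finset.mem_image_of_mem u hz)
      have h2' : au ≤ u z := Finset.min'_le _ _ (Finset.mem_image_of_mem u hz)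
      linarith
    have hAvx : Av = v x := by linarith
    have havx : av = v x := by linarith
    have hconstv : ∀ z ∈ N, v z = v x := by
      intro z hz
      have h1' : v z ≤ Av := Finset.le_max' _ _ (Finset.mem_image_of_mem v hz)
      have h2' : av ≤ v z := Finset.min'_le _ _ (Finset.mem_image_of_mem v hz)
      linarith
    have hallS : ∀ z ∈ N, z ∈ S ∧ u z = U := by
      intro z hz
      have hwz : w z = M := by simp only [hw, hconstu z hz, hconstv z hz]; exact hMx
      have hzI : z ∈ I := by
        by_contra h
        have h0 : w z = 0 := by simp [hw, hbd z hz h]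
        rw [h0] at hwz; linarith
      exact ⟨Finset.mem_filter.2 ⟨hzI, hwz⟩, by rw [hconstu z hz, hxU]⟩
    obtain ⟨hy0S, hy0U⟩ := hallS y0 hy0N
    rcases hy0r with h | h
    · exact absurd (Finset.mem_of_mem_filter _ hy0S) h
    · exact ⟨y0, hy0S, hy0U, h⟩
  have no : ∀ n x, x ∈ S → u x = U → rank x ≤ n → False := by
    intro n
    induction n with
    | zero =>
      intro x hxS hxU hr
      obtain ⟨y, _, _, hlt⟩ := step x hxS hxU
      omega
    | succ n ih =>
      intro x hxS hxU hr
      obtain ⟨y, hyS, hyU, hlt⟩ := step x hxS hxU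
      exact ih y hyS hyU (by omega)
  exact no (rank x1) x1 hx1S hx1U le_rfl

lemma comparison_eq {W : Type*} (adj : W → W → Prop) (u v : W → ℝ) (I : Finset W) (rank : W → ℕ)
    (H : ∀ x ∈ I, ∃ N : Finset W, N.Nonempty ∧ {y | adj x y} = ↑N ∧
      (∀ y ∈ N, y ∉ I → u y = v y) ∧ (∃ y ∈ N, y ∉ I ∨ rank y < rank x))
    (hu : ∀ x ∈ I, lapInf adj u x = 0) (hv : ∀ x ∈ I, lapInf adj v x = 0) :
    ∀ x ∈ I, u x = v x := by
  intro x hx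
  refine le_antisymm (comparison adj u v I rank H hu hv x hx)
    (comparison adj v u I rank ?_ hv hu x hx)
  intro x' hx'
  obtain ⟨N, h1, h2, h3, h4⟩ := H x' hx'
  exact ⟨N, h1, h2, fun y hy hyI => (h3 y hy hyI).symm, h4⟩

end Stmt16aux

namespace Stmt16aux

/-! ### candidate functions -/

def lift {α : Type*} (d : α) (f : ℤ × ℤ → α) : ℝ × ℝ → α :=
  fun x => if h : ∃ p, PZ p = x then f h.choose else d

lemma lift_PZ {α : Type*} (d : α) (f : ℤ × ℤ → α) (p : ℤ × ℤ) : lift d f (PZ p) = f p := by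
  have h : ∃ p', PZ p' = PZ p := ⟨p, rfl⟩
  show (if h : ∃ p', PZ p' = PZ p then f h.choose else d) = f p
  rw [dif_pos h]
  congr 1
  exact PZ_inj h.choose_spec

def sQ (e : ℝ) : ℤ × ℤ → ℝ := fun p =>
  if p = (8,0) then e else if p = (4,4) then 1 else
  if p = (4,0) then (1+e)/4 else if p = (2,2) then 1/2 else if p = (6,2) then (1+e)/2 else 0

lemma sQ_00 (e : ℝ) : sQ e (0,0) = 0 := by simp only [sQ]; norm_num [Prod.ext_iff]
lemma sQ_80 (e : ℝ) : sQ e (8,0) = e := by simp only [sQ]; norm_num [Prod.ext_iff]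
lemma sQ_44 (e : ℝ) : sQ e (4,4) = 1 := by simp only [sQ]; norm_num [Prod.ext_iff]
lemma sQ_40 (e : ℝ) : sQ e (4,0) = (1+e)/4 := by simp only [sQ]; norm_num [Prod.ext_iff]
lemma sQ_22 (e : ℝ) : sQ e (2,2) = 1/2 := by simp only [sQ]; norm_num [Prod.ext_iff]
lemma sQ_62 (e : ℝ) : sQ e (6,2) = (1+e)/2 := by simp only [sQ]; norm_num [Prod.ext_iff]

def tQ (e : ℝ) : ℤ × ℤ → ℝ := fun p =>
  if p = (8,0) then e else if p = (4,4) then 1 else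
  if p = (4,0) then 1/4 + e/3 else if p = (2,2) then 1/2 else if p = (6,2) then 1/2 + e/2 else
  if p = (2,0) then 1/6 else if p = (1,1) then 1/4 else if p = (3,1) then 1/3 else
  if p = (6,0) then 1/6 + 5*e/6 else if p = (7,1) then 1/4 + 3*e/4 else
  if p = (5,1) then 1/3 + 2*e/3 else
  if p = (3,3) then 3/4 else if p = (5,3) then 3/4 + e/4 else if p = (4,2) then 5/8 + e/8 else 0

lemma tQ_00 (e : ℝ) : tQ e (0,0) = 0 := by simp only [tQ]; norm_num [Prod.ext_iff]
lemma tQ_80 (e : ℝ) : tQ e (8,0) = e := by simp only [tQ]; norm_num [Prod.ext_iff]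
lemma tQ_44 (e : ℝ) : tQ e (4,4) = 1 := by simp only [tQ]; norm_num [Prod.ext_iff]
lemma tQ_40 (e : ℝ) : tQ e (4,0) = 1/4 + e/3 := by simp only [tQ]; norm_num [Prod.ext_iff]
lemma tQ_22 (e : ℝ) : tQ e (2,2) = 1/2 := by simp only [tQ]; norm_num [Prod.ext_iff]
lemma tQ_62 (e : ℝ) : tQ e (6,2) = 1/2 + e/2 := by simp only [tQ]; norm_num [Prod.ext_iff]
lemma tQ_20 (e : ℝ) : tQ e (2,0) = 1/6 := by simp only [tQ]; norm_num [Prod.ext_iff]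
lemma tQ_11 (e : ℝ) : tQ e (1,1) = 1/4 := by simp only [tQ]; norm_num [Prod.ext_iff]
lemma tQ_31 (e : ℝ) : tQ e (3,1) = 1/3 := by simp only [tQ]; norm_num [Prod.ext_iff]
lemma tQ_60 (e : ℝ) : tQ e (6,0) = 1/6 + 5*e/6 := by simp only [tQ]; norm_num [Prod.ext_iff]
lemma tQ_71 (e : ℝ) : tQ e (7,1) = 1/4 + 3*e/4 := by simp only [tQ]; norm_num [Prod.ext_iff]
lemma tQ_51 (e : ℝ) : tQ e (5,1) = 1/3 + 2*e/3 := by simp only [tQ]; norm_num [Prod.ext_iff]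
lemma tQ_33 (e : ℝ) : tQ e (3,3) = 3/4 := by simp only [tQ]; norm_num [Prod.ext_iff]
lemma tQ_53 (e : ℝ) : tQ e (5,3) = 3/4 + e/4 := by simp only [tQ]; norm_num [Prod.ext_iff]
lemma tQ_42 (e : ℝ) : tQ e (4,2) = 5/8 + e/8 := by simp only [tQ]; norm_num [Prod.ext_iff]

def rkQ : ℤ × ℤ → ℕ := fun p =>
  if p ∈ ([(2,0),(1,1),(6,0),(7,1),(3,3),(5,3)] : List (ℤ × ℤ)) then 1 else 2

def rk : ℝ × ℝ → ℕ := lift 0 rkQ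

def I1F : Finset (ℝ × ℝ) := IL1.toFinset.image PZ
def I2F : Finset (ℝ × ℝ) := IL2.toFinset.image PZ

lemma mem_I1F {p : ℤ × ℤ} : PZ p ∈ I1F ↔ p ∈ IL1 := by
  simp only [I1F, Finset.mem_image, List.mem_toFinset]
  constructor
  · rintro ⟨r, hr, h⟩; rwa [← PZ_inj h]
  · exact fun h => ⟨p, h, rfl⟩

lemma mem_I2F {p : ℤ × ℤ} : PZ p ∈ I2F ↔ p ∈ IL2 := by
  simp only [I2F, Finset.mem_image, List.mem_toFinset]
  constructor
  · rintro ⟨r, hr, h⟩; rwa [← PZ_inj h]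
  · exact fun h => ⟨p, h, rfl⟩

lemma memVn1 {p : ℤ × ℤ} (hp : p ∈ IL1) : PZ p ∈ Vn 1 \ V0 := by
  constructor
  · have H : ∀ p ∈ IL1, ∃ i k : Fin 3, C1 i k = p := by decide
    obtain ⟨i, k, hik⟩ := H p hp
    refine Set.mem_iUnion₂.2 ⟨[i], rfl, (mem_cell1_iff i _).2 ⟨p, ?_, rfl⟩⟩
    rw [← hik]; fin_cases k <;> simp [cellL1]
  · intro hv
    have H : ∀ p ∈ IL1, ¬(p = (0,0) ∨ p = (8,0) ∨ p = (4,4)) := by decide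
    apply H p hp
    simp only [V0, q0_PZ, q1_PZ, q2_PZ, Set.mem_insert_iff, Set.mem_singleton_iff] at hv
    rcases hv with h | h | h
    · exact Or.inl (PZ_inj h)
    · exact Or.inr (Or.inl (PZ_inj h))
    · exact Or.inr (Or.inr (PZ_inj h))

lemma memVn2 {p : ℤ × ℤ} (hp : p ∈ IL2) : PZ p ∈ Vn 2 \ V0 := by
  constructor
  · have H : ∀ p ∈ IL2, ∃ i j k : Fin 3, C2 i j k = p := by decide
    obtain ⟨i, j, k, hik⟩ := H p hp
    refine Set.mem_iUnion₂.2 ⟨[i,j], rfl, (mem_cell2_iff i j _).2 ⟨p, ?_, rfl⟩⟩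
    rw [← hik]; fin_cases k <;> simp [cellL2]
  · intro hv
    have H : ∀ p ∈ IL2, ¬(p = (0,0) ∨ p = (8,0) ∨ p = (4,4)) := by decide
    apply H p hp
    simp only [V0, q0_PZ, q1_PZ, q2_PZ, Set.mem_insert_iff, Set.mem_singleton_iff] at hv
    rcases hv with h | h | h
    · exact Or.inl (PZ_inj h)
    · exact Or.inr (Or.inl (PZ_inj h))
    · exact Or.inr (Or.inr (PZ_inj h))

lemma Hdata1 (e : ℝ) (u : ℝ × ℝ → ℝ)
    (hb0 : u (PZ (0,0)) = 0) (hb1 : u (PZ (8,0)) = e) (hb2 : u (PZ (4,4)) = 1)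
    {p : ℤ × ℤ} (hp : p ∈ IL1) :
    ∃ N : Finset (ℝ × ℝ), N.Nonempty ∧ {y | adjN 1 (PZ p) y} = ↑N ∧
      (∀ y ∈ N, y ∉ I1F → u y = lift 0 (sQ e) y) ∧
      (∃ y ∈ N, y ∉ I1F ∨ (fun _ => (0:ℕ)) y < (fun _ => (0:ℕ)) (PZ p)) := by
  refine ⟨(N1 p).image PZ, ?_, nbrset1 p, ?_, ?_⟩
  · have H : ∀ p ∈ IL1, 0 < (N1 p).card := by decide
    exact (Finset.card_pos.1 (H p hp)).image PZ
  · intro y hy hyI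
    obtain ⟨r, hr, rfl⟩ := Finset.mem_image.1 hy
    have hrI : r ∉ IL1 := fun h => hyI (mem_I1F.2 h)
    have H : ∀ p ∈ IL1, ∀ r ∈ N1 p, r ∈ IL1 ∨ r = (0,0) ∨ r = (8,0) ∨ r = (4,4) := by decide
    rcases H p hp r hr with h | rfl | rfl | rfl
    · exact absurd h hrI
    · rw [lift_PZ, hb0, sQ_00]
    · rw [lift_PZ, hb1, sQ_80]
    · rw [lift_PZ, hb2, sQ_44]
  · have H : ∀ p ∈ IL1, ∃ r ∈ N1 p, r ∉ IL1 := by decide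
    obtain ⟨r, hr, hc⟩ := H p hp
    exact ⟨PZ r, Finset.mem_image_of_mem PZ hr, Or.inl (fun hm => hc (mem_I1F.1 hm))⟩

lemma Hdata2 (e : ℝ) (u : ℝ × ℝ → ℝ)
    (hb0 : u (PZ (0,0)) = 0) (hb1 : u (PZ (8,0)) = e) (hb2 : u (PZ (4,4)) = 1)
    {p : ℤ × ℤ} (hp : p ∈ IL2) :
    ∃ N : Finset (ℝ × ℝ), N.Nonempty ∧ {y | adjN 2 (PZ p) y} = ↑N ∧
      (∀ y ∈ N, y ∉ I2F → u y = lift 0 (tQ e) y) ∧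
      (∃ y ∈ N, y ∉ I2F ∨ rk y < rk (PZ p)) := by
  refine ⟨(N2 p).image PZ, ?_, nbrset2 p, ?_, ?_⟩
  · have H : ∀ p ∈ IL2, 0 < (N2 p).card := by decide
    exact (Finset.card_pos.1 (H p hp)).image PZ
  · intro y hy hyI
    obtain ⟨r, hr, rfl⟩ := Finset.mem_image.1 hy
    have hrI : r ∉ IL2 := fun h => hyI (mem_I2F.2 h)
    have H : ∀ p ∈ IL2, ∀ r ∈ N2 p, r ∈ IL2 ∨ r = (0,0) ∨ r = (8,0) ∨ r = (4,4) := by decide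
    rcases H p hp r hr with h | rfl | rfl | rfl
    · exact absurd h hrI
    · rw [lift_PZ, hb0, tQ_00]
    · rw [lift_PZ, hb1, tQ_80]
    · rw [lift_PZ, hb2, tQ_44]
  · have H : ∀ p ∈ IL2, ∃ r ∈ N2 p, r ∉ IL2 ∨ rkQ r < rkQ p := by decide
    obtain ⟨r, hr, hc⟩ := H p hp
    refine ⟨PZ r, Finset.mem_image_of_mem PZ hr, ?_⟩
    rcases hc with h | h
    · exact Or.inl (fun hm => h (mem_I2F.1 hm))
    · exact Or.inr (by simp only [rk, lift_PZ]; exact h)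

end Stmt16aux

namespace Stmt16aux

lemma coe_img4 (r1 r2 r3 r4 : ℤ × ℤ) :
    (↑(({r1,r2,r3,r4} : Finset (ℤ × ℤ)).image PZ) : Set (ℝ × ℝ)) = {PZ r1, PZ r2, PZ r3, PZ r4} := by
  simp [Finset.image_insert]

lemma nbr1_40 : {y | adjN 1 (PZ (4,0)) y} = {PZ (0,0), PZ (8,0), PZ (2,2), PZ (6,2)} := by
  rw [nbrset1, show N1 (4,0) = {(0,0),(8,0),(2,2),(6,2)} from by decide, coe_img4]

lemma nbr1_22 : {y | adjN 1 (PZ (2,2)) y} = {PZ (0,0), PZ (4,0), PZ (6,2), PZ (4,4)} := by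
  rw [nbrset1, show N1 (2,2) = {(0,0),(4,0),(6,2),(4,4)} from by decide, coe_img4]

lemma nbr1_62 : {y | adjN 1 (PZ (6,2)) y} = {PZ (8,0), PZ (4,0), PZ (2,2), PZ (4,4)} := by
  rw [nbrset1, show N1 (6,2) = {(8,0),(4,0),(2,2),(4,4)} from by decide, coe_img4]

lemma nbr2_40 : {y | adjN 2 (PZ (4,0)) y} = {PZ (2,0), PZ (3,1), PZ (6,0), PZ (5,1)} := by
  rw [nbrset2, show N2 (4,0) = {(2,0),(3,1),(6,0),(5,1)} from by decide, coe_img4]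

lemma nbr2_22 : {y | adjN 2 (PZ (2,2)) y} = {PZ (1,1), PZ (3,1), PZ (3,3), PZ (4,2)} := by
  rw [nbrset2, show N2 (2,2) = {(1,1),(3,1),(3,3),(4,2)} from by decide, coe_img4]

lemma nbr2_62 : {y | adjN 2 (PZ (6,2)) y} = {PZ (7,1), PZ (5,1), PZ (5,3), PZ (4,2)} := by
  rw [nbrset2, show N2 (6,2) = {(7,1),(5,1),(5,3),(4,2)} from by decide, coe_img4]

lemma nbr2_20 : {y | adjN 2 (PZ (2,0)) y} = {PZ (0,0), PZ (1,1), PZ (4,0), PZ (3,1)} := by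
  rw [nbrset2, show N2 (2,0) = {(0,0),(1,1),(4,0),(3,1)} from by decide, coe_img4]

lemma nbr2_11 : {y | adjN 2 (PZ (1,1)) y} = {PZ (0,0), PZ (2,0), PZ (2,2), PZ (3,1)} := by
  rw [nbrset2, show N2 (1,1) = {(0,0),(2,0),(2,2),(3,1)} from by decide, coe_img4]

lemma nbr2_31 : {y | adjN 2 (PZ (3,1)) y} = {PZ (4,0), PZ (2,0), PZ (2,2), PZ (1,1)} := by
  rw [nbrset2, show N2 (3,1) = {(4,0),(2,0),(2,2),(1,1)} from by decide, coe_img4]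

lemma nbr2_60 : {y | adjN 2 (PZ (6,0)) y} = {PZ (8,0), PZ (7,1), PZ (4,0), PZ (5,1)} := by
  rw [nbrset2, show N2 (6,0) = {(8,0),(7,1),(4,0),(5,1)} from by decide, coe_img4]

lemma nbr2_71 : {y | adjN 2 (PZ (7,1)) y} = {PZ (8,0), PZ (6,0), PZ (6,2), PZ (5,1)} := by
  rw [nbrset2, show N2 (7,1) = {(8,0),(6,0),(6,2),(5,1)} from by decide, coe_img4]

lemma nbr2_51 : {y | adjN 2 (PZ (5,1)) y} = {PZ (4,0), PZ (6,0), PZ (6,2), PZ (7,1)} := by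
  rw [nbrset2, show N2 (5,1) = {(4,0),(6,0),(6,2),(7,1)} from by decide, coe_img4]

lemma nbr2_33 : {y | adjN 2 (PZ (3,3)) y} = {PZ (4,4), PZ (5,3), PZ (2,2), PZ (4,2)} := by
  rw [nbrset2, show N2 (3,3) = {(4,4),(5,3),(2,2),(4,2)} from by decide, coe_img4]

lemma nbr2_53 : {y | adjN 2 (PZ (5,3)) y} = {PZ (4,4), PZ (3,3), PZ (6,2), PZ (4,2)} := by
  rw [nbrset2, show N2 (5,3) = {(4,4),(3,3),(6,2),(4,2)} from by decide, coe_img4]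

lemma nbr2_42 : {y | adjN 2 (PZ (4,2)) y} = {PZ (2,2), PZ (3,3), PZ (6,2), PZ (5,3)} := by
  rw [nbrset2, show N2 (4,2) = {(2,2),(3,3),(6,2),(5,3)} from by decide, coe_img4]

lemma lap1_40 (e : ℝ) (he0 : 0 < e) (he1 : e ≤ 1/7) :
    lapInf (adjN 1) (lift 0 (sQ e)) (PZ (4,0)) = 0 := by
  rw [lap_quad (adjN 1) (lift 0 (sQ e)) (PZ (4,0)) (PZ (0,0)) (PZ (8,0)) (PZ (2,2)) (PZ (6,2)) nbr1_40]
  simp only [lift_PZ, sQ_00, sQ_80, sQ_44, sQ_40, sQ_22, sQ_62]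
  exact quad_zero (max4 (M := (1+e)/2) (by tauto) (by linarith) (by linarith) (by linarith) (by linarith))
    (min4 (m := 0) (by tauto) (by linarith) (by linarith) (by linarith) (by linarith)) (by linarith)

lemma lap1_22 (e : ℝ) (he0 : 0 < e) (he1 : e ≤ 1/7) :
    lapInf (adjN 1) (lift 0 (sQ e)) (PZ (2,2)) = 0 := by
  rw [lap_quad (adjN 1) (lift 0 (sQ e)) (PZ (2,2)) (PZ (0,0)) (PZ (4,0)) (PZ (6,2)) (PZ (4,4)) nbr1_22]
  simp only [lift_PZ, sQ_00, sQ_80, sQ_44, sQ_40, sQ_22, sQ_62]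
  exact quad_zero (max4 (M := 1) (by tauto) (by linarith) (by linarith) (by linarith) (by linarith))
    (min4 (m := 0) (by tauto) (by linarith) (by linarith) (by linarith) (by linarith)) (by linarith)

lemma lap1_62 (e : ℝ) (he0 : 0 < e) (he1 : e ≤ 1/7) :
    lapInf (adjN 1) (lift 0 (sQ e)) (PZ (6,2)) = 0 := by
  rw [lap_quad (adjN 1) (lift 0 (sQ e)) (PZ (6,2)) (PZ (8,0)) (PZ (4,0)) (PZ (2,2)) (PZ (4,4)) nbr1_62]
  simp only [lift_PZ, sQ_00, sQ_80, sQ_44, sQ_40, sQ_22, sQ_62]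
  exact quad_zero (max4 (M := 1) (by tauto) (by linarith) (by linarith) (by linarith) (by linarith))
    (min4 (m := e) (by tauto) (by linarith) (by linarith) (by linarith) (by linarith)) (by linarith)

lemma lap2_40 (e : ℝ) (he0 : 0 < e) (he1 : e ≤ 1/7) :
    lapInf (adjN 2) (lift 0 (tQ e)) (PZ (4,0)) = 0 := by
  rw [lap_quad (adjN 2) (lift 0 (tQ e)) (PZ (4,0)) (PZ (2,0)) (PZ (3,1)) (PZ (6,0)) (PZ (5,1)) nbr2_40]
  simp only [lift_PZ, tQ_00, tQ_80, tQ_44, tQ_40, tQ_22, tQ_62, tQ_20, tQ_11, tQ_31, tQ_60, tQ_71, tQ_51, tQ_33, tQ_53, tQ_42]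
  exact quad_zero (max4 (M := 1/3 + 2*e/3) (by tauto) (by linarith) (by linarith) (by linarith) (by linarith))
    (min4 (m := 1/6) (by tauto) (by linarith) (by linarith) (by linarith) (by linarith)) (by linarith)

lemma lap2_22 (e : ℝ) (he0 : 0 < e) (he1 : e ≤ 1/7) :
    lapInf (adjN 2) (lift 0 (tQ e)) (PZ (2,2)) = 0 := by
  rw [lap_quad (adjN 2) (lift 0 (tQ e)) (PZ (2,2)) (PZ (1,1)) (PZ (3,1)) (PZ (3,3)) (PZ (4,2)) nbr2_22]
  simp only [lift_PZ, tQ_00, tQ_80, tQ_44, tQ_40, tQ_22, tQ_62, tQ_20, tQ_11, tQ_31, tQ_60, tQ_71, tQ_51, tQ_33, tQ_53, tQ_42]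
  exact quad_zero (max4 (M := 3/4) (by tauto) (by linarith) (by linarith) (by linarith) (by linarith))
    (min4 (m := 1/4) (by tauto) (by linarith) (by linarith) (by linarith) (by linarith)) (by linarith)

lemma lap2_62 (e : ℝ) (he0 : 0 < e) (he1 : e ≤ 1/7) :
    lapInf (adjN 2) (lift 0 (tQ e)) (PZ (6,2)) = 0 := by
  rw [lap_quad (adjN 2) (lift 0 (tQ e)) (PZ (6,2)) (PZ (7,1)) (PZ (5,1)) (PZ (5,3)) (PZ (4,2)) nbr2_62]
  simp only [lift_PZ, tQ_00, tQ_80, tQ_44, tQ_40, tQ_22, tQ_62, tQ_20, tQ_11, tQ_31, tQ_60, tQ_71, tQ_51, tQ_33, tQ_53, tQ_42]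
  exact quad_zero (max4 (M := 3/4 + e/4) (by tauto) (by linarith) (by linarith) (by linarith) (by linarith))
    (min4 (m := 1/4 + 3*e/4) (by tauto) (by linarith) (by linarith) (by linarith) (by linarith)) (by linarith)

lemma lap2_20 (e : ℝ) (he0 : 0 < e) (he1 : e ≤ 1/7) :
    lapInf (adjN 2) (lift 0 (tQ e)) (PZ (2,0)) = 0 := by
  rw [lap_quad (adjN 2) (lift 0 (tQ e)) (PZ (2,0)) (PZ (0,0)) (PZ (1,1)) (PZ (4,0)) (PZ (3,1)) nbr2_20]
  simp only [lift_PZ, tQ_00, tQ_80, tQ_44, tQ_40, tQ_22, tQ_62, tQ_20, tQ_11, tQ_31, tQ_60, tQ_71, tQ_51, tQ_33, tQ_53, tQ_42]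
  exact quad_zero (max4 (M := 1/3) (by tauto) (by linarith) (by linarith) (by linarith) (by linarith))
    (min4 (m := 0) (by tauto) (by linarith) (by linarith) (by linarith) (by linarith)) (by linarith)

lemma lap2_11 (e : ℝ) (he0 : 0 < e) (he1 : e ≤ 1/7) :
    lapInf (adjN 2) (lift 0 (tQ e)) (PZ (1,1)) = 0 := by
  rw [lap_quad (adjN 2) (lift 0 (tQ e)) (PZ (1,1)) (PZ (0,0)) (PZ (2,0)) (PZ (2,2)) (PZ (3,1)) nbr2_11]
  simp only [lift_PZ, tQ_00, tQ_80, tQ_44, tQ_40, tQ_22, tQ_62, tQ_20, tQ_11, tQ_31, tQ_60, tQ_71, tQ_51, tQ_33, tQ_53, tQ_42]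
  exact quad_zero (max4 (M := 1/2) (by tauto) (by linarith) (by linarith) (by linarith) (by linarith))
    (min4 (m := 0) (by tauto) (by linarith) (by linarith) (by linarith) (by linarith)) (by linarith)

lemma lap2_31 (e : ℝ) (he0 : 0 < e) (he1 : e ≤ 1/7) :
    lapInf (adjN 2) (lift 0 (tQ e)) (PZ (3,1)) = 0 := by
  rw [lap_quad (adjN 2) (lift 0 (tQ e)) (PZ (3,1)) (PZ (4,0)) (PZ (2,0)) (PZ (2,2)) (PZ (1,1)) nbr2_31]
  simp only [lift_PZ, tQ_00, tQ_80, tQ_44, tQ_40, tQ_22, tQ_62, tQ_20, tQ_11, tQ_31, tQ_60, tQ_71, tQ_51, tQ_33, tQ_53, tQ_42]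
  exact quad_zero (max4 (M := 1/2) (by tauto) (by linarith) (by linarith) (by linarith) (by linarith))
    (min4 (m := 1/6) (by tauto) (by linarith) (by linarith) (by linarith) (by linarith)) (by linarith)

lemma lap2_60 (e : ℝ) (he0 : 0 < e) (he1 : e ≤ 1/7) :
    lapInf (adjN 2) (lift 0 (tQ e)) (PZ (6,0)) = 0 := by
  rw [lap_quad (adjN 2) (lift 0 (tQ e)) (PZ (6,0)) (PZ (8,0)) (PZ (7,1)) (PZ (4,0)) (PZ (5,1)) nbr2_60]
  simp only [lift_PZ, tQ_00, tQ_80, tQ_44, tQ_40, tQ_22, tQ_62, tQ_20, tQ_11, tQ_31, tQ_60, tQ_71, tQ_51, tQ_33, tQ_53, tQ_42]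
  exact quad_zero (max4 (M := 1/3 + 2*e/3) (by tauto) (by linarith) (by linarith) (by linarith) (by linarith))
    (min4 (m := e) (by tauto) (by linarith) (by linarith) (by linarith) (by linarith)) (by linarith)

lemma lap2_71 (e : ℝ) (he0 : 0 < e) (he1 : e ≤ 1/7) :
    lapInf (adjN 2) (lift 0 (tQ e)) (PZ (7,1)) = 0 := by
  rw [lap_quad (adjN 2) (lift 0 (tQ e)) (PZ (7,1)) (PZ (8,0)) (PZ (6,0)) (PZ (6,2)) (PZ (5,1)) nbr2_71]
  simp only [lift_PZ, tQ_00, tQ_80, tQ_44, tQ_40, tQ_22, tQ_62, tQ_20, tQ_11, tQ_31, tQ_60, tQ_71, tQ_51, tQ_33, tQ_53, tQ_42]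
  exact quad_zero (max4 (M := 1/2 + e/2) (by tauto) (by linarith) (by linarith) (by linarith) (by linarith))
    (min4 (m := e) (by tauto) (by linarith) (by linarith) (by linarith) (by linarith)) (by linarith)

lemma lap2_51 (e : ℝ) (he0 : 0 < e) (he1 : e ≤ 1/7) :
    lapInf (adjN 2) (lift 0 (tQ e)) (PZ (5,1)) = 0 := by
  rw [lap_quad (adjN 2) (lift 0 (tQ e)) (PZ (5,1)) (PZ (4,0)) (PZ (6,0)) (PZ (6,2)) (PZ (7,1)) nbr2_51]
  simp only [lift_PZ, tQ_00, tQ_80, tQ_44, tQ_40, tQ_22, tQ_62, tQ_20, tQ_11, tQ_31, tQ_60, tQ_71, tQ_51, tQ_33, tQ_53, tQ_42]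
  exact quad_zero (max4 (M := 1/2 + e/2) (by tauto) (by linarith) (by linarith) (by linarith) (by linarith))
    (min4 (m := 1/6 + 5*e/6) (by tauto) (by linarith) (by linarith) (by linarith) (by linarith)) (by linarith)

lemma lap2_33 (e : ℝ) (he0 : 0 < e) (he1 : e ≤ 1/7) :
    lapInf (adjN 2) (lift 0 (tQ e)) (PZ (3,3)) = 0 := by
  rw [lap_quad (adjN 2) (lift 0 (tQ e)) (PZ (3,3)) (PZ (4,4)) (PZ (5,3)) (PZ (2,2)) (PZ (4,2)) nbr2_33]
  simp only [lift_PZ, tQ_00, tQ_80, tQ_44, tQ_40, tQ_22, tQ_62, tQ_20, tQ_11, tQ_31, tQ_60, tQ_71, tQ_51, tQ_33, tQ_53, tQ_42]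
  exact quad_zero (max4 (M := 1) (by tauto) (by linarith) (by linarith) (by linarith) (by linarith))
    (min4 (m := 1/2) (by tauto) (by linarith) (by linarith) (by linarith) (by linarith)) (by linarith)

lemma lap2_53 (e : ℝ) (he0 : 0 < e) (he1 : e ≤ 1/7) :
    lapInf (adjN 2) (lift 0 (tQ e)) (PZ (5,3)) = 0 := by
  rw [lap_quad (adjN 2) (lift 0 (tQ e)) (PZ (5,3)) (PZ (4,4)) (PZ (3,3)) (PZ (6,2)) (PZ (4,2)) nbr2_53]
  simp only [lift_PZ, tQ_00, tQ_80, tQ_44, tQ_40, tQ_22, tQ_62, tQ_20, tQ_11, tQ_31, tQ_60, tQ_71, tQ_51, tQ_33, tQ_53, tQ_42]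
  exact quad_zero (max4 (M := 1) (by tauto) (by linarith) (by linarith) (by linarith) (by linarith))
    (min4 (m := 1/2 + e/2) (by tauto) (by linarith) (by linarith) (by linarith) (by linarith)) (by linarith)

lemma lap2_42 (e : ℝ) (he0 : 0 < e) (he1 : e ≤ 1/7) :
    lapInf (adjN 2) (lift 0 (tQ e)) (PZ (4,2)) = 0 := by
  rw [lap_quad (adjN 2) (lift 0 (tQ e)) (PZ (4,2)) (PZ (2,2)) (PZ (3,3)) (PZ (6,2)) (PZ (5,3)) nbr2_42]
  simp only [lift_PZ, tQ_00, tQ_80, tQ_44, tQ_40, tQ_22, tQ_62, tQ_20, tQ_11, tQ_31, tQ_60, tQ_71, tQ_51, tQ_33, tQ_53, tQ_42]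
  exact quad_zero (max4 (M := 3/4 + e/4) (by tauto) (by linarith) (by linarith) (by linarith) (by linarith))
    (min4 (m := 1/2) (by tauto) (by linarith) (by linarith) (by linarith) (by linarith)) (by linarith)

end Stmt16aux

namespace Stmt16aux

lemma level1 (e : ℝ) (he0 : 0 < e) (he1 : e ≤ 1/7) (u : ℝ × ℝ → ℝ)
    (hb0 : u (PZ (0,0)) = 0) (hb1 : u (PZ (8,0)) = e) (hb2 : u (PZ (4,4)) = 1)
    (hu : ∀ x ∈ Vn 1 \ V0, lapInf (adjN 1) u x = 0) :
    u (PZ (4,0)) = (1+e)/4 := by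
  have hH : ∀ x ∈ I1F, ∃ N : Finset (ℝ × ℝ), N.Nonempty ∧ {y | adjN 1 x y} = ↑N ∧
      (∀ y ∈ N, y ∉ I1F → u y = lift 0 (sQ e) y) ∧
      (∃ y ∈ N, y ∉ I1F ∨ (fun _ => (0:ℕ)) y < (fun _ => (0:ℕ)) x) := by
    intro x hx
    obtain ⟨p, hp, rfl⟩ := Finset.mem_image.1 hx
    exact Hdata1 e u hb0 hb1 hb2 (List.mem_toFinset.1 hp)
  have hueq : ∀ x ∈ I1F, lapInf (adjN 1) u x = 0 := by
    intro x hx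
    obtain ⟨p, hp, rfl⟩ := Finset.mem_image.1 hx
    exact hu _ (memVn1 (List.mem_toFinset.1 hp))
  have hveq : ∀ x ∈ I1F, lapInf (adjN 1) (lift 0 (sQ e)) x = 0 := by
    intro x hx
    obtain ⟨p, hp, rfl⟩ := Finset.mem_image.1 hx
    have hp' : p ∈ IL1 := List.mem_toFinset.1 hp
    simp only [IL1, List.mem_cons, List.not_mem_nil, or_false] at hp'
    rcases hp' with rfl | rfl | rfl
    · exact lap1_40 e he0 he1
    · exact lap1_22 e he0 he1
    · exact lap1_62 e he0 he1
  have key := comparison_eq (adjN 1) u (lift 0 (sQ e)) I1F (fun _ => 0) hH hueq hveq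
    (PZ (4,0)) (mem_I1F.2 (by decide))
  rw [key, lift_PZ, sQ_40]

lemma level2 (e : ℝ) (he0 : 0 < e) (he1 : e ≤ 1/7) (u : ℝ × ℝ → ℝ)
    (hb0 : u (PZ (0,0)) = 0) (hb1 : u (PZ (8,0)) = e) (hb2 : u (PZ (4,4)) = 1)
    (hu : ∀ x ∈ Vn 2 \ V0, lapInf (adjN 2) u x = 0) :
    u (PZ (4,0)) = 1/4 + e/3 := by
  have hH : ∀ x ∈ I2F, ∃ N : Finset (ℝ × ℝ), N.Nonempty ∧ {y | adjN 2 x y} = ↑N ∧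
      (∀ y ∈ N, y ∉ I2F → u y = lift 0 (tQ e) y) ∧
      (∃ y ∈ N, y ∉ I2F ∨ rk y < rk x) := by
    intro x hx
    obtain ⟨p, hp, rfl⟩ := Finset.mem_image.1 hx
    exact Hdata2 e u hb0 hb1 hb2 (List.mem_toFinset.1 hp)
  have hueq : ∀ x ∈ I2F, lapInf (adjN 2) u x = 0 := by
    intro x hx
    obtain ⟨p, hp, rfl⟩ := Finset.mem_image.1 hx
    exact hu _ (memVn2 (List.mem_toFinset.1 hp))
  have hveq : ∀ x ∈ I2F, lapInf (adjN 2) (lift 0 (tQ e)) x = 0 := by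
    intro x hx
    obtain ⟨p, hp, rfl⟩ := Finset.mem_image.1 hx
    have hp' : p ∈ IL2 := List.mem_toFinset.1 hp
    simp only [IL2, List.mem_cons, List.not_mem_nil, or_false] at hp'
    rcases hp' with rfl | rfl | rfl | rfl | rfl | rfl | rfl | rfl | rfl | rfl | rfl | rfl
    · exact lap2_40 e he0 he1
    · exact lap2_22 e he0 he1
    · exact lap2_62 e he0 he1
    · exact lap2_20 e he0 he1
    · exact lap2_11 e he0 he1
    · exact lap2_31 e he0 he1
    · exact lap2_60 e he0 he1
    · exact lap2_71 e he0 he1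
    · exact lap2_51 e he0 he1
    · exact lap2_33 e he0 he1
    · exact lap2_53 e he0 he1
    · exact lap2_42 e he0 he1
  have key := comparison_eq (adjN 2) u (lift 0 (tQ e)) I2F rk hH hueq hveq
    (PZ (4,0)) (mem_I2F.2 (by decide))
  rw [key, lift_PZ, tQ_40]

end Stmt16aux

open Stmt16aux

/-- Incompatibility of infinity harmonic extensions across levels:
`u¹(q₁₂) = (1+e)/4` but `u²(q₁₂) = (3+4e)/12`, so `u²` restricted to `V¹`
is not infinity harmonic on the level-1 graph. -/
theorem stmt16 (e : ℝ) (he : e ∈ Set.Ioc (0 : ℝ) (1/7))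
    (g u1 u2 : ℝ × ℝ → ℝ)
    (hg1 : g (q 0) = 0) (hg2 : g (q 1) = e) (hg3 : g (q 2) = 1)
    (hu1b : ∀ x ∈ V0, u1 x = g x) (hu1 : ∀ x ∈ Vn 1 \ V0, lapInf (adjN 1) u1 x = 0)
    (hu2b : ∀ x ∈ V0, u2 x = g x) (hu2 : ∀ x ∈ Vn 2 \ V0, lapInf (adjN 2) u2 x = 0) :
    u1 ((2:ℝ)⁻¹ • (q 0 + q 1)) = (1 + e)/4 ∧
    u2 ((2:ℝ)⁻¹ • (q 0 + q 1)) = (3 + 4*e)/12 ∧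
    u2 ((2:ℝ)⁻¹ • (q 0 + q 1)) ≠ u1 ((2:ℝ)⁻¹ • (q 0 + q 1)) ∧
    ¬ (∀ x ∈ Vn 1 \ V0, lapInf (adjN 1) u2 x = 0) := by

  obtain ⟨he0, he1⟩ := he
  have hm : (2:ℝ)⁻¹ • (q 0 + q 1) = PZ (4,0) := by
    simp [q, PZ, Prod.ext_iff, Prod.smul_mk]
    norm_num
  have hq0 : q 0 ∈ V0 := by simp [V0]
  have hq1 : q 1 ∈ V0 := by simp [V0]
  have hq2 : q 2 ∈ V0 := by simp [V0]
  have hb10 : u1 (PZ (0,0)) = 0 := by rw [← q0_PZ, hu1b _ hq0, hg1]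
  have hb11 : u1 (PZ (8,0)) = e := by rw [← q1_PZ, hu1b _ hq1, hg2]
  have hb12 : u1 (PZ (4,4)) = 1 := by rw [← q2_PZ, hu1b _ hq2, hg3]
  have hb20 : u2 (PZ (0,0)) = 0 := by rw [← q0_PZ, hu2b _ hq0, hg1]
  have hb21 : u2 (PZ (8,0)) = e := by rw [← q1_PZ, hu2b _ hq1, hg2]
  have hb22 : u2 (PZ (4,4)) = 1 := by rw [← q2_PZ, hu2b _ hq2, hg3]
  have h1 : u1 (PZ (4,0)) = (1+e)/4 := level1 e he0 he1 u1 hb10 hb11 hb12 hu1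
  have h2 : u2 (PZ (4,0)) = 1/4 + e/3 := level2 e he0 he1 u2 hb20 hb21 hb22 hu2
  rw [hm]
  refine ⟨h1, by rw [h2]; ring, ?_, ?_⟩
  · rw [h1, h2]
    intro h
    linarith
  · intro hcon
    have hx := level1 e he0 he1 u2 hb20 hb21 hb22 hcon
    rw [h2] at hx
    linarith
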